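/- Let G be a finite group, H ≤ G a subgroup, and E : ℂ[G] → ℂ[H] the linear map with E[g] = g for g ∈ H and E[g] = 0 for g ∈ G\H. Then for every irreducible representation π^α of H with minimal central projection e^α ∈ ℂ[H], and every b ∈ ℂ[G], tr π^α(E[b]) = (1/([G:H]·dim α)) Σ_{β ∈ Ĝ} (dim β)· tr π^β(b e^α), where the sum runs over the irreducible representations π^β of G. -/

import Mathlib

open CategoryTheory Classical

/-- The linear extension to `ℂ[G]` of `tr ∘ π` for a representation `π` of `G` with
character `χ`: `tr π(a) = Σ_g a_g χ(g)`. -/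
noncomputable def trExt {G : Type} [Group G] (V : FDRep ℂ G) (a : MonoidAlgebra ℂ G) : ℂ :=
  a.coeff.sum (fun g c => c * V.character g)

/-- `tr π^α(E[b])` for `α` a representation of the subgroup `H` and `b ∈ ℂ[G]`, where
`E : ℂ[G] → ℂ[H]` is the restriction map (`E[g] = g` for `g ∈ H`, `E[g] = 0` otherwise). -/
noncomputable def trResExt {G : Type} [Group G] (H : Subgroup G) (A : FDRep ℂ H)
    (b : MonoidAlgebra ℂ G) : ℂ :=
  b.coeff.sum (fun g c => if hg : g ∈ H then c * A.character ⟨g, hg⟩ else 0)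

/-- The minimal central projection `e^α = (dim α/|H|) Σ_{h∈H} χ^α(h⁻¹) h`, regarded as an
element of `ℂ[G]`. -/
noncomputable def eproj {G : Type} [Group G] [Fintype G] (H : Subgroup G) (A : FDRep ℂ H) :
    MonoidAlgebra ℂ G :=
  (A.character 1 / (Nat.card H : ℂ)) •
    ∑ h : H, A.character h⁻¹ • MonoidAlgebra.single (h : G) (1 : ℂ)

section Helpers
open Polynomial Module LinearMap


lemma trace_inv_eq_conj {V : Type} [AddCommGroup V] [Module ℂ V] [FiniteDimensional ℂ V]
    (f g : Module.End ℂ V) (n : ℕ) (hn : 0 < n) (hfn : f ^ n = 1) (hfg : f * g = 1)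
    (hgf : g * f = 1) :
    LinearMap.trace ℂ V g = starRingEnd ℂ (LinearMap.trace ℂ V f) := by
  classical
  have hsq : Squarefree (X ^ n - 1 : ℂ[X]) := by
    have := (Polynomial.separable_X_pow_sub_C (1 : ℂ)
      (Nat.cast_ne_zero.mpr hn.ne') one_ne_zero).squarefree
    simpa using this
  have h0 : aeval f (X ^ n - 1 : ℂ[X]) = 0 := by
    simp [map_sub, hfn]
  have hss := Module.End.isSemisimple_of_squarefree_aeval_eq_zero hsq h0
  set N : ℂ → Submodule ℂ V := f.eigenspace with hN
  have hsup : ⨆ μ, N μ = ⊤ := by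
    have h1 := f.iSup_maxGenEigenspace_eq_top
    have h2 : ∀ μ, f.maxGenEigenspace μ = N μ := fun μ =>
      hss.isFinitelySemisimple.maxGenEigenspace_eq_eigenspace μ
    simpa [h2] using h1
  have hind : iSupIndep N := f.eigenspaces_iSupIndep
  have hint : DirectSum.IsInternal N :=
    DirectSum.isInternal_submodule_of_iSupIndep_of_iSup_eq_top hind hsup
  have hfin : {μ | N μ ≠ ⊥}.Finite := WellFoundedGT.finite_ne_bot_of_iSupIndep hind
  -- g0 : for x in eigenspace μ, x = μ • g x
  have hgx : ∀ μ : ℂ, ∀ x ∈ N μ, x = μ • g x := by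
    intro μ x hx
    rw [Module.End.mem_eigenspace_iff] at hx
    have := congrArg g hx
    rw [map_smul] at this
    calc x = (g * f) x := by rw [hgf]; rfl
    _ = g (f x) := rfl
    _ = μ • g x := by rw [hx, map_smul]
  have hmapf : ∀ μ, Set.MapsTo f (N μ) (N μ) := by
    intro μ x hx
    have hx' := hx
    rw [SetLike.mem_coe, Module.End.mem_eigenspace_iff] at hx'
    rw [SetLike.mem_coe, hx']
    exact Submodule.smul_mem _ _ hx
  have hmapg : ∀ μ, Set.MapsTo g (N μ) (N μ) := by
    intro μ x hx
    rw [SetLike.mem_coe] at hx ⊢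
    rw [Module.End.mem_eigenspace_iff]
    have h1 : x = μ • g x := hgx μ x hx
    have h2 : f (g x) = x := by calc f (g x) = (f * g) x := rfl
                                   _ = x := by rw [hfg]; rfl
    rw [h2]; exact h1
  -- eigenvalues are roots of unity
  have hroot : ∀ μ : ℂ, N μ ≠ ⊥ → μ ^ n = 1 := by
    intro μ hμ
    obtain ⟨x, hx, hx0⟩ := Submodule.exists_mem_ne_zero_of_ne_bot hμ
    rw [Module.End.mem_eigenspace_iff] at hx
    have hpow : ∀ k : ℕ, (f ^ k) x = μ ^ k • x := by
      intro k
      induction k with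
      | zero => simp
      | succ k ih =>
        rw [pow_succ, pow_succ]
        calc (f ^ k * f) x = (f ^ k) (f x) := rfl
        _ = (f ^ k) (μ • x) := by rw [hx]
        _ = μ • (f ^ k) x := by rw [map_smul]
        _ = μ • (μ ^ k • x) := by rw [ih]
        _ = (μ ^ k * μ) • x := by rw [smul_smul, mul_comm]
    have := hpow n
    rw [hfn] at this
    have h1 : (1 : ℂ) • x = μ ^ n • x := by simpa using this
    have h2 : (μ ^ n - 1) • x = 0 := by
      rw [sub_smul, ← h1, one_smul, sub_self]
    rcases smul_eq_zero.mp h2 with h | h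
    · exact sub_eq_zero.mp h
    · exact absurd h hx0
  have habs : ∀ μ : ℂ, N μ ≠ ⊥ → (starRingEnd ℂ) μ = μ⁻¹ := by
    intro μ hμ
    have h1 : μ ^ n = 1 := hroot μ hμ
    have hμ0 : μ ≠ 0 := by
      intro h; rw [h, zero_pow hn.ne'] at h1; exact zero_ne_one h1
    have habs1 : ‖μ‖ = 1 := by
      have : ‖μ‖ ^ n = 1 := by
        rw [← norm_pow, h1, norm_one]
      rcases (pow_eq_one_iff_cases).mp this with h | h | h
      · omega
      · exact h
      · nlinarith [norm_nonneg μ]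
    have : μ * (starRingEnd ℂ) μ = 1 := by
      rw [Complex.mul_conj, ← Complex.sq_norm, habs1]; norm_num
    exact eq_inv_of_mul_eq_one_right (by rw [mul_comm]; rw [mul_comm] at this; exact this)
  have htf : LinearMap.trace ℂ V f = ∑ μ ∈ hfin.toFinset, μ * (finrank ℂ (N μ) : ℂ) := by
    rw [LinearMap.trace_eq_sum_trace_restrict' hint hfin hmapf]
    refine Finset.sum_congr rfl fun μ _ => ?_
    have hres : f.restrict (hmapf μ) = μ • (1 : Module.End ℂ (N μ)) := by
      ext x
      have hx : f (x : V) = μ • (x : V) := Module.End.mem_eigenspace_iff.mp x.2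
      exact hx
    rw [hres, map_smul, LinearMap.trace_one]
    simp [smul_eq_mul]
  have htg : LinearMap.trace ℂ V g = ∑ μ ∈ hfin.toFinset, μ⁻¹ * (finrank ℂ (N μ) : ℂ) := by
    rw [LinearMap.trace_eq_sum_trace_restrict' hint hfin hmapg]
    refine Finset.sum_congr rfl fun μ hμ => ?_
    rw [Set.Finite.mem_toFinset] at hμ
    have hμ0 : μ ≠ 0 := by
      intro h
      have h1 := hroot μ hμ
      rw [h, zero_pow hn.ne'] at h1; exact zero_ne_one h1
    have hres : g.restrict (hmapg μ) = μ⁻¹ • (1 : Module.End ℂ (N μ)) := by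
      ext x
      have hx : (x : V) = μ • g (x : V) := hgx μ x x.2
      have : g (x : V) = μ⁻¹ • (x : V) := by
        have h2 : μ⁻¹ • (x : V) = μ⁻¹ • (μ • g (x : V)) := by rw [← hx]
        rw [smul_smul, inv_mul_cancel₀ hμ0, one_smul] at h2
        exact h2.symm
      exact this
    rw [hres, map_smul, LinearMap.trace_one]
    simp [smul_eq_mul]
  rw [htf, htg, map_sum]
  refine Finset.sum_congr rfl fun μ hμ => ?_
  rw [Set.Finite.mem_toFinset] at hμ
  rw [map_mul, habs μ hμ]
  congr 1
  simp

lemma char_inv_eq_conj {G : Type} [Group G] [Finite G] (V : FDRep ℂ G) (g : G) :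
    V.character g⁻¹ = starRingEnd ℂ (V.character g) := by
  have hord : 0 < orderOf g := orderOf_pos g
  have h1 : (V.ρ g) ^ orderOf g = 1 := by
    rw [← map_pow, pow_orderOf_eq_one, map_one]
  have h2 : V.ρ g * V.ρ g⁻¹ = 1 := by rw [← map_mul, mul_inv_cancel, map_one]
  have h3 : V.ρ g⁻¹ * V.ρ g = 1 := by rw [← map_mul, inv_mul_cancel, map_one]
  exact trace_inv_eq_conj (V.ρ g) (V.ρ g⁻¹) (orderOf g) hord h1 h2 h3

lemma sum_char_one_mul_char {G : Type} [Group G] [Fintype G] {ι : Type} [Fintype ι]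
    (W : ι → FDRep ℂ G) [∀ i, CategoryTheory.Simple (W i)]
    (hdistinct : ∀ i j : ι, i ≠ j → IsEmpty (W i ≅ W j))
    (hcomplete : ∑ i : ι, ((W i).character 1) ^ 2 = (Fintype.card G : ℂ))
    (x : G) :
    ∑ i : ι, (W i).character 1 * (W i).character x =
      if x = 1 then (Fintype.card G : ℂ) else 0 := by
  classical
  have hcard : (Fintype.card G : ℂ) ≠ 0 := Nat.cast_ne_zero.mpr Fintype.card_ne_zero
  set s : G → ℂ := fun y => ∑ i : ι, (W i).character 1 * (W i).character y with hs
  set r : G → ℂ := fun y => if y = 1 then (Fintype.card G : ℂ) else 0 with hr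
  have hone : ∀ i, starRingEnd ℂ ((W i).character 1) = (W i).character 1 := by
    intro i
    rw [FDRep.char_one]
    simp
  have horth : ∀ i j : ι, ∑ y : G, (W i).character y * (W j).character y⁻¹ =
      if i = j then (Fintype.card G : ℂ) else 0 := by
    intro i j
    letI : Invertible (Nat.card G : ℂ) :=
      invertibleOfNonzero (Nat.cast_ne_zero.mpr Nat.card_pos.ne')
    have h := FDRep.char_orthonormal (W i) (W j)
    have h' : (Fintype.card G : ℂ)⁻¹ • ∑ y : G, (W i).character y * (W j).character y⁻¹ =
        (if Nonempty (W i ≅ W j) then (1:ℂ) else 0) := by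
        rw [smul_eq_mul, ← Nat.card_eq_fintype_card]; exact h
    have h2 := (inv_smul_eq_iff₀ hcard).mp h'
    rw [h2]
    by_cases hij : i = j
    · subst hij
      rw [if_pos ⟨CategoryTheory.Iso.refl _⟩, if_pos rfl, smul_eq_mul, mul_one]
    · rw [if_neg (by exact (hdistinct i j hij).false ∘ Nonempty.some), if_neg hij,
        smul_eq_mul, mul_zero]
  have hs1 : s 1 = (Fintype.card G : ℂ) := by
    rw [hs, ← hcomplete]
    exact Finset.sum_congr rfl fun i _ => (sq _).symm
  have hconj_s : ∀ y, starRingEnd ℂ (s y) =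
      ∑ j : ι, (W j).character 1 * (W j).character y⁻¹ := by
    intro y
    rw [hs, map_sum]
    refine Finset.sum_congr rfl fun j _ => ?_
    rw [map_mul, hone, char_inv_eq_conj]
  have hconj_r : ∀ y, starRingEnd ℂ (r y) = r y := by
    intro y
    rw [hr]
    by_cases hy : y = 1 <;> simp [hy]
  have hT : ∑ y : G, (r y - s y) * starRingEnd ℂ (r y - s y) = 0 := by
    have hA : ∑ y : G, r y * starRingEnd ℂ (r y) =
        (Fintype.card G : ℂ) * (Fintype.card G : ℂ) := by
      rw [Finset.sum_congr rfl (fun y (_ : y ∈ Finset.univ) =>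
          (show r y * starRingEnd ℂ (r y) =
            if y = 1 then (Fintype.card G : ℂ) * (Fintype.card G : ℂ) else 0 by
              by_cases hy : y = 1 <;> simp [hr, hy]))]
      simp
    have hB : ∑ y : G, r y * starRingEnd ℂ (s y) =
        (Fintype.card G : ℂ) * (Fintype.card G : ℂ) := by
      rw [Finset.sum_congr rfl (fun y (_ : y ∈ Finset.univ) =>
          (show r y * starRingEnd ℂ (s y) =
            if y = 1 then (Fintype.card G : ℂ) * starRingEnd ℂ (s y) else 0 by
              by_cases hy : y = 1 <;> simp [hr, hy]))]
      rw [Finset.sum_ite_eq' Finset.univ (1 : G)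
        (fun y => (Fintype.card G : ℂ) * starRingEnd ℂ (s y))]
      rw [if_pos (Finset.mem_univ _), hs1, map_natCast]
    have hC : ∑ y : G, s y * starRingEnd ℂ (r y) =
        (Fintype.card G : ℂ) * (Fintype.card G : ℂ) := by
      rw [Finset.sum_congr rfl (fun y (_ : y ∈ Finset.univ) =>
          (show s y * starRingEnd ℂ (r y) =
            if y = 1 then s y * (Fintype.card G : ℂ) else 0 by
              by_cases hy : y = 1 <;> simp [hr, hy]))]
      rw [Finset.sum_ite_eq' Finset.univ (1 : G) (fun y => s y * (Fintype.card G : ℂ))]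
      rw [if_pos (Finset.mem_univ _), hs1, mul_comm]
    have hD : ∑ y : G, s y * starRingEnd ℂ (s y) =
        (Fintype.card G : ℂ) * (Fintype.card G : ℂ) := by
      have : ∀ y : G, s y * starRingEnd ℂ (s y) =
          ∑ i : ι, ∑ j : ι, ((W i).character 1 * (W j).character 1) *
            ((W i).character y * (W j).character y⁻¹) := by
        intro y
        rw [hconj_s, hs, Finset.sum_mul_sum]
        refine Finset.sum_congr rfl fun i _ => Finset.sum_congr rfl fun j _ => by ring
      rw [Finset.sum_congr rfl (fun y (_ : y ∈ Finset.univ) => this y)]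
      rw [Finset.sum_comm]
      calc ∑ i : ι, ∑ y : G, ∑ j : ι, ((W i).character 1 * (W j).character 1) *
            ((W i).character y * (W j).character y⁻¹)
          = ∑ i : ι, ∑ j : ι, ((W i).character 1 * (W j).character 1) *
            ∑ y : G, (W i).character y * (W j).character y⁻¹ := by
            refine Finset.sum_congr rfl fun i _ => ?_
            rw [Finset.sum_comm]
            exact Finset.sum_congr rfl fun j _ => (Finset.mul_sum _ _ _).symm
        _ = ∑ i : ι, ((W i).character 1 * (W i).character 1) * (Fintype.card G : ℂ) := by
            refine Finset.sum_congr rfl fun i _ => ?_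
            rw [Finset.sum_eq_single i]
            · rw [horth i i, if_pos rfl]
            · intro j _ hj
              rw [horth i j, if_neg (fun h => hj h.symm), mul_zero]
            · intro h; exact absurd (Finset.mem_univ i) h
        _ = (Fintype.card G : ℂ) * (Fintype.card G : ℂ) := by
            have he : ∑ i : ι, (W i).character 1 * (W i).character 1 =
                (Fintype.card G : ℂ) := by
              rw [← hcomplete]
              exact Finset.sum_congr rfl fun i _ => (sq _).symm
            rw [← Finset.sum_mul, he]
    calc ∑ y : G, (r y - s y) * starRingEnd ℂ (r y - s y)
        = ∑ y : G, (r y * starRingEnd ℂ (r y) - r y * starRingEnd ℂ (s y)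
            - s y * starRingEnd ℂ (r y) + s y * starRingEnd ℂ (s y)) := by
          refine Finset.sum_congr rfl fun y _ => ?_
          rw [map_sub]; ring
      _ = 0 := by
          rw [Finset.sum_add_distrib, Finset.sum_sub_distrib, Finset.sum_sub_distrib,
            hA, hB, hC, hD]
          ring
  have hnormsq : ∀ y : G, r y = s y := by
    have h1 : ∑ y : G, (Complex.normSq (r y - s y) : ℝ) = 0 := by
      have h2 : ∑ y : G, ((Complex.normSq (r y - s y) : ℝ) : ℂ) = 0 := by
        rw [← hT]
        exact Finset.sum_congr rfl fun y _ => (Complex.mul_conj _).symm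
      exact_mod_cast h2
    intro y
    have h3 := (Finset.sum_eq_zero_iff_of_nonneg
      (fun z _ => Complex.normSq_nonneg (r z - s z))).mp h1 y (Finset.mem_univ y)
    have h4 := Complex.normSq_eq_zero.mp h3
    exact sub_eq_zero.mp h4
  have := (hnormsq x).symm
  rw [hs, hr] at this
  exact this
lemma trExt_eq_sum {G : Type} [Group G] [Fintype G] (V : FDRep ℂ G) (a : MonoidAlgebra ℂ G) :
    trExt V a = ∑ g : G, a.coeff g * V.character g :=
  Finsupp.sum_fintype _ _ (fun g => zero_mul _)

lemma char_one_ne_zero {G : Type} [Group G] [Finite G] (A : FDRep ℂ G) [Simple A] :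
    A.character 1 ≠ 0 := by
  letI : Fintype G := Fintype.ofFinite G
  intro hd
  have hfr : Module.finrank ℂ A = 0 := by
    rw [FDRep.char_one] at hd
    exact_mod_cast hd
  have hsub : Subsingleton A := Module.finrank_zero_iff.mp hfr
  have hchar : ∀ g : G, A.character g = 0 := by
    intro g
    show LinearMap.trace ℂ A (A.ρ g) = 0
    rw [Subsingleton.elim (A.ρ g) 0, map_zero]
  letI : Invertible (Nat.card G : ℂ) :=
    invertibleOfNonzero (Nat.cast_ne_zero.mpr Nat.card_pos.ne')
  have h := FDRep.char_orthonormal A A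
  rw [if_pos ⟨CategoryTheory.Iso.refl _⟩] at h
  have : (Nat.card G : ℂ)⁻¹ * (0:ℂ) = 1 := by
    rw [← h]
    congr 1
    refine (Finset.sum_eq_zero fun g _ => ?_).symm
    rw [hchar, zero_mul]
  rw [mul_zero] at this
  exact zero_ne_one this

end Helpers

/-- Let `G` be a finite group, `H ≤ G`, `E : ℂ[G] → ℂ[H]` the restriction map, `π^α` an
irreducible representation of `H` with minimal central projection `e^α ∈ ℂ[H]`, and let
`(π^β)_{β ∈ Ĝ}` be a complete family of pairwise non-isomorphic irreducible
representations of `G`.  Then for every `b ∈ ℂ[G]`,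
`tr π^α(E[b]) = (1/([G:H]·dim α)) Σ_{β ∈ Ĝ} (dim β)·tr π^β(b e^α)`. -/

theorem trRes_eq_sum_over_irreps {G : Type} [Group G] [Fintype G] (H : Subgroup G)
    (A : FDRep ℂ H) [Simple A]
    {ι : Type} [Fintype ι] (W : ι → FDRep ℂ G) [∀ i, Simple (W i)]
    (hdistinct : ∀ i j : ι, i ≠ j → IsEmpty (W i ≅ W j))
    (hcomplete : ∑ i : ι, ((W i).character 1) ^ 2 = (Fintype.card G : ℂ))
    (b : MonoidAlgebra ℂ G) :
    trResExt H A b =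
      (1 / ((H.index : ℂ) * A.character 1)) *
        ∑ i : ι, (W i).character 1 * trExt (W i) (b * eproj H A) := by
  classical
  set c : ℂ := A.character 1 / (Nat.card H : ℂ) with hc
  -- LHS
  have hLHS : trResExt H A b = ∑ h : H, b.coeff (h : G) * A.character h := by
    rw [trResExt, Finsupp.sum_fintype _ _ (fun g => by
      by_cases hg : g ∈ H <;> simp [hg])]
    rw [← Finset.sum_filter_of_ne (p := (· ∈ H))
      (fun g _ hne => by by_contra hg; exact hne (by simp [hg]))]
    rw [Finset.sum_subtype (p := (· ∈ H)) _ (fun g => by simp) _]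
    exact Finset.sum_congr rfl fun a _ => by rw [dif_pos a.2]
  -- expansion of trExt of b * eproj
  have hexp : ∀ V : FDRep ℂ G, trExt V (b * eproj H A) =
      c * ∑ h : H, A.character h⁻¹ * ∑ g : G, b.coeff g * V.character (g * (h : G)) := by
    intro V
    rw [trExt_eq_sum]
    have hco : ∀ g : G, (b * eproj H A).coeff g =
        c * ∑ h : H, A.character h⁻¹ * b.coeff (g * (h : G)⁻¹) := by
      intro g
      rw [eproj, ← hc, mul_smul_comm, MonoidAlgebra.coeff_smul_apply, smul_eq_mul]
      congr 1
      rw [Finset.mul_sum, MonoidAlgebra.coeff_sum, Finset.sum_apply']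
      refine Finset.sum_congr rfl fun h _ => ?_
      rw [mul_smul_comm, MonoidAlgebra.coeff_smul_apply, MonoidAlgebra.coeff_mul_single_apply, mul_one,
        smul_eq_mul]
    calc ∑ g : G, (b * eproj H A).coeff g * V.character g
        = c * ∑ g : G, ∑ h : H, A.character h⁻¹ * b.coeff (g * (h : G)⁻¹) * V.character g := by
          rw [Finset.mul_sum]
          refine Finset.sum_congr rfl fun g _ => ?_
          rw [hco g, mul_assoc, Finset.sum_mul, Finset.mul_sum]
      _ = c * ∑ h : H, A.character h⁻¹ * ∑ g : G, b.coeff g * V.character (g * (h : G)) := by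
          congr 1
          rw [Finset.sum_comm]
          refine Finset.sum_congr rfl fun h _ => ?_
          rw [Finset.mul_sum]
          refine (Fintype.sum_equiv (Equiv.mulRight (h : G)) _ _ fun g => ?_).symm
          simp only [Equiv.coe_mulRight, mul_inv_cancel_right]
          ring
  -- key column orthogonality
  have hkey : ∀ x : G, ∑ i : ι, (W i).character 1 * (W i).character x =
      if x = 1 then (Fintype.card G : ℂ) else 0 :=
    sum_char_one_mul_char W hdistinct hcomplete
  -- compute the big sum
  have hsum : ∑ i : ι, (W i).character 1 * trExt (W i) (b * eproj H A) =
      c * (Fintype.card G : ℂ) * ∑ h : H, A.character h * b.coeff (h : G) := by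
    calc ∑ i : ι, (W i).character 1 * trExt (W i) (b * eproj H A)
        = c * ∑ h : H, A.character h⁻¹ * ∑ g : G, b.coeff g *
            ∑ i : ι, (W i).character 1 * (W i).character (g * (h : G)) := by
          have h1 : ∀ i : ι, (W i).character 1 * trExt (W i) (b * eproj H A) =
              ∑ h : H, ∑ g : G, c * (A.character h⁻¹ * (b.coeff g *
                ((W i).character 1 * (W i).character (g * (h : G))))) := by
            intro i
            rw [hexp (W i)]
            simp only [Finset.mul_sum]
            refine Finset.sum_congr rfl fun h _ => Finset.sum_congr rfl fun g _ => ?_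
            ring
          rw [Finset.sum_congr rfl fun i _ => h1 i]
          simp only [Finset.mul_sum]
          rw [Finset.sum_comm]
          refine Finset.sum_congr rfl fun h _ => ?_
          rw [Finset.sum_comm]
      _ = c * ∑ h : H, A.character h⁻¹ * (b.coeff ((h : G)⁻¹) * (Fintype.card G : ℂ)) := by
          congr 1
          refine Finset.sum_congr rfl fun h _ => ?_
          congr 1
          calc ∑ g : G, b.coeff g * ∑ i : ι, (W i).character 1 * (W i).character (g * (h : G))
              = ∑ g : G, (if g = (h : G)⁻¹ then b.coeff g * (Fintype.card G : ℂ) else 0) := by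
                refine Finset.sum_congr rfl fun g _ => ?_
                rw [hkey]
                by_cases hg : g = (h : G)⁻¹
                · rw [if_pos (by rw [hg, inv_mul_cancel]), if_pos hg]
                · rw [if_neg (fun he => hg (eq_inv_of_mul_eq_one_left he)), if_neg hg,
                    mul_zero]
            _ = b.coeff ((h : G)⁻¹) * (Fintype.card G : ℂ) := by
                rw [Finset.sum_ite_eq' Finset.univ ((h : G)⁻¹)
                  (fun g => b.coeff g * (Fintype.card G : ℂ)), if_pos (Finset.mem_univ _)]
      _ = c * (Fintype.card G : ℂ) * ∑ h : H, A.character h * b.coeff (h : G) := by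
          have heq : ∑ h : H, A.character h⁻¹ * (b.coeff ((h : G))⁻¹ * (Fintype.card G : ℂ)) =
              ∑ h : H, (Fintype.card G : ℂ) * (A.character h * b.coeff (h : G)) := by
            refine Fintype.sum_equiv (Equiv.inv H) _ _ fun h => ?_
            simp only [Equiv.inv_apply]
            have hcoe : ((h⁻¹ : H) : G) = ((h : G))⁻¹ := rfl
            rw [hcoe]
            ring
          rw [heq, ← Finset.mul_sum, ← mul_assoc]
  -- finish
  rw [hLHS, hsum, hc]
  have hd : A.character 1 ≠ 0 := char_one_ne_zero A
  have hH : (Nat.card H : ℂ) ≠ 0 := Nat.cast_ne_zero.mpr Nat.card_pos.ne'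
  have hidx : (H.index : ℂ) ≠ 0 :=
    Nat.cast_ne_zero.mpr (Subgroup.index_ne_zero_of_finite)
  have hcardmul : (H.index : ℂ) * (Nat.card H : ℂ) = (Fintype.card G : ℂ) := by
    rw [← Nat.cast_mul, Subgroup.index_mul_card, Nat.card_eq_fintype_card]
  rw [← hcardmul]
  field_simp
  refine Finset.sum_congr rfl fun h _ => ?_
  ring
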